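/- Let n ≥ 1, let σ : Fin n ≃ Fin n be a permutation, let Lˢ and Lᵗ be n×n real matrices, let t be a real number, and let K ≥ 1 be a natural number. For z ∈ {s,t} define the truncated heat diffusion wavelet Ψᶻ = ∑_{k=1}^{K} ((−t)^k / k!) (Lᶻ)^k, and for a real constant Ψ̄ define Bᶻ by Bᶻ_{ij} = Ψ̄ − Ψᶻ_{ij} if i ≠ j and Bᶻ_{ii} = 0. For each k ∈ {1,…,K} define the perturbation Δ⁽ᵏ⁾_{ij} = ((Lˢ)^k)_{ij} − ((Lᵗ)^k)_{σ(i)σ(j)}. Fix a node i and nonnegative reals ε₁,…,ε_K, and assume that for every k ∈ {1,…,K}: ∑_{j=1}^{n} (Δ⁽ᵏ⁾_{ij})² ≤ ε_k. Then the topology violation of the matched pair (i, σ(i)) satisfies ∑_{j=1}^{n} (Bˢ_{ij} − Bᵗ_{σ(i)σ(j)})² ≤ K · ∑_{k=1}^{K} (t^k / k!)² · ε_k. -/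

import Mathlib

/-- Theorem 1 of the paper: per-node bound on the topology violation of the true matching.
`Ψˢ, Ψᵗ` are the truncated K-th order heat diffusion wavelets, `Bˢ, Bᵗ` the node
dissimilarity matrices, `Δ k` the k-th order perturbation, and the conclusion bounds the
topology violation of the pair `(i, σ i)`. -/
theorem sigma_theorem1_per_node
    (n K : ℕ) (hn : 1 ≤ n) (hK : 1 ≤ K)
    (σ : Equiv.Perm (Fin n)) (Ls Lt : Matrix (Fin n) (Fin n) ℝ) (t Ψbar : ℝ)
    (Ψs Ψt : Matrix (Fin n) (Fin n) ℝ)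
    (hΨs : Ψs = ∑ k ∈ Finset.Icc 1 K, ((-t) ^ k / (Nat.factorial k : ℝ)) • Ls ^ k)
    (hΨt : Ψt = ∑ k ∈ Finset.Icc 1 K, ((-t) ^ k / (Nat.factorial k : ℝ)) • Lt ^ k)
    (Bs Bt : Matrix (Fin n) (Fin n) ℝ)
    (hBs : ∀ i j : Fin n, Bs i j = if i = j then 0 else Ψbar - Ψs i j)
    (hBt : ∀ i j : Fin n, Bt i j = if i = j then 0 else Ψbar - Ψt i j)
    (Δ : ℕ → Matrix (Fin n) (Fin n) ℝ)
    (hΔ : ∀ (k : ℕ) (i j : Fin n), Δ k i j = (Ls ^ k) i j - (Lt ^ k) (σ i) (σ j))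
    (i : Fin n) (ε : ℕ → ℝ) (hε : ∀ k ∈ Finset.Icc 1 K, 0 ≤ ε k)
    (hbound : ∀ k ∈ Finset.Icc 1 K, ∑ j : Fin n, (Δ k i j) ^ 2 ≤ ε k) :
    ∑ j : Fin n, (Bs i j - Bt (σ i) (σ j)) ^ 2 ≤
      (K : ℝ) * ∑ k ∈ Finset.Icc 1 K, (t ^ k / (Nat.factorial k : ℝ)) ^ 2 * ε k := by
  set c : ℕ → ℝ := fun k => (-t) ^ k / (Nat.factorial k : ℝ) with hc
  have key : ∀ j : Fin n, (Bs i j - Bt (σ i) (σ j)) ^ 2 ≤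
      (K : ℝ) * ∑ k ∈ Finset.Icc 1 K, (c k) ^ 2 * (Δ k i j) ^ 2 := by
    intro j
    have hrhs : 0 ≤ (K : ℝ) * ∑ k ∈ Finset.Icc 1 K, (c k) ^ 2 * (Δ k i j) ^ 2 := by
      positivity
    by_cases h : i = j
    · subst h
      simp [hBs, hBt]
      exact hrhs
    · have hσ : σ i ≠ σ j := fun hh => h (σ.injective hh)
      have hdiff : Bs i j - Bt (σ i) (σ j)
          = ∑ k ∈ Finset.Icc 1 K, c k * (-(Δ k i j)) := by
        rw [hBs, hBt, if_neg h, if_neg hσ, hΨs, hΨt]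
        simp only [Matrix.sum_apply, Matrix.smul_apply, smul_eq_mul, hΔ, hc,
          mul_neg, neg_sub, mul_sub, Finset.sum_sub_distrib]
        ring
      rw [hdiff]
      calc (∑ k ∈ Finset.Icc 1 K, c k * (-(Δ k i j))) ^ 2
          ≤ (Finset.Icc 1 K).card * ∑ k ∈ Finset.Icc 1 K, (c k * (-(Δ k i j))) ^ 2 :=
            sq_sum_le_card_mul_sum_sq
        _ = (K : ℝ) * ∑ k ∈ Finset.Icc 1 K, (c k) ^ 2 * (Δ k i j) ^ 2 := by
            rw [Nat.card_Icc]
            simp only [Nat.add_sub_cancel]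
            congr 1; apply Finset.sum_congr rfl; intro k _; ring
  calc ∑ j : Fin n, (Bs i j - Bt (σ i) (σ j)) ^ 2
      ≤ ∑ j : Fin n, (K : ℝ) * ∑ k ∈ Finset.Icc 1 K, (c k) ^ 2 * (Δ k i j) ^ 2 :=
        Finset.sum_le_sum fun j _ => key j
    _ = (K : ℝ) * ∑ k ∈ Finset.Icc 1 K, (c k) ^ 2 * ∑ j : Fin n, (Δ k i j) ^ 2 := by
        rw [← Finset.mul_sum, Finset.sum_comm]
        congr 1; apply Finset.sum_congr rfl; intro k _
        rw [Finset.mul_sum]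
    _ ≤ (K : ℝ) * ∑ k ∈ Finset.Icc 1 K, (t ^ k / (Nat.factorial k : ℝ)) ^ 2 * ε k := by
        apply mul_le_mul_of_nonneg_left _ (by positivity)
        apply Finset.sum_le_sum
        intro k hk
        have hck : (c k) ^ 2 = (t ^ k / (Nat.factorial k : ℝ)) ^ 2 := by
          simp only [hc]
          rw [div_pow, div_pow, ← pow_mul, ← pow_mul, mul_comm k 2, pow_mul, pow_mul, neg_sq]
        rw [hck]
        exact mul_le_mul_of_nonneg_left (hbound k hk) (by positivity)
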